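/- If F : A → B is an objective triangle functor satisfying condition (I), then the Verdier quotient functor V_F : A → A/Ker(F) is full. -/

import Mathlib

open CategoryTheory CategoryTheory.Limits CategoryTheory.Pretriangulated
open ZeroObject

universe v₁ v₂ u₁ u₂

variable {A : Type u₁} {B : Type u₂} [Category.{v₁} A] [Category.{v₂} B]
  [Preadditive A] [Preadditive B] [HasZeroObject A] [HasZeroObject B]
  [HasShift A ℤ] [HasShift B ℤ]
  [∀ n : ℤ, (shiftFunctor A n).Additive] [∀ n : ℤ, (shiftFunctor B n).Additive]
  [Pretriangulated A] [Pretriangulated B] [IsTriangulated A] [IsTriangulated B]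


/-- If `F` is an objective triangle functor satisfying condition (I), then the
Verdier quotient functor `V_F : A ⟶ A/Ker F` is full. -/
theorem stmt15 (F : A ⥤ B) [F.CommShift ℤ] [F.IsTriangulated]
    (S : ObjectProperty A) [S.IsTriangulated] (hS : ∀ X : A, S X ↔ IsZero (F.obj X))
    (Ft : S.trW.Localization ⥤ B) (e : S.trW.Q ⋙ Ft ≅ F)
    (hobj : ∀ (X Y : A) (f : X ⟶ Y), F.map f = 0 →
      ∃ (K : A) (g : X ⟶ K) (h : K ⟶ Y), IsZero (F.obj K) ∧ f = g ≫ h)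
    (hI : ∀ (X Y : A) (u : X ⟶ Y), IsIso (F.map u) →
      ∃ u' : Y ⟶ X, F.map u ≫ F.map u' = 𝟙 (F.obj X) ∧
        F.map u' ≫ F.map u = 𝟙 (F.obj Y)) :
    S.trW.Q.Full := by
  -- objects of `S` become zero in the localization
  have hzero : ∀ (K : A), S K → IsZero (S.trW.Q.obj K) := by
    intro K hK
    have hW : S.trW (0 : K ⟶ 0) :=
      ObjectProperty.trW.mk S
        (rot_of_distTriang _ (contractible_distinguished K)) (S.le_shift 1 _ hK)
    have : IsIso (S.trW.Q.map (0 : K ⟶ 0)) := Localization.inverts S.trW.Q S.trW _ hW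
    have h0 : IsZero (S.trW.Q.obj (0 : A)) := S.trW.Q.map_isZero (isZero_zero A)
    exact (isZero_zero _).of_iso ((asIso (S.trW.Q.map (0 : K ⟶ 0))) ≪≫ h0.isoZero)
  constructor
  intro X Y φ
  obtain ⟨z, hz⟩ := Localization.exists_leftFraction S.trW.Q S.trW φ
  -- `F.map z.s` is an isomorphism
  obtain ⟨Z, g, h, hT, hZ⟩ := z.hs
  have hFs : IsIso (F.map z.s) := by
    have hT' := F.map_distinguished _ hT
    have := (Triangle.isZero₃_iff_isIso₁ _ hT').1 (by
      exact (hS Z).1 hZ)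
    exact this
  obtain ⟨s', hs'₁, hs'₂⟩ := hI _ _ z.s hFs
  refine ⟨z.f ≫ s', ?_⟩
  have hQs : IsIso (S.trW.Q.map z.s) := Localization.inverts S.trW.Q S.trW _ z.hs
  rw [hz]
  have key : S.trW.Q.map ((z.f ≫ s') ≫ z.s) = S.trW.Q.map z.f := by
    have hF0 : F.map ((z.f ≫ s') ≫ z.s - z.f) = 0 := by
      rw [F.map_sub, F.map_comp, F.map_comp, Category.assoc, hs'₂,
        Category.comp_id, sub_self]
    obtain ⟨K, a, b, hK, hab⟩ := hobj _ _ _ hF0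
    have hQK : IsZero (S.trW.Q.obj K) := hzero K ((hS K).2 hK)
    have : S.trW.Q.map ((z.f ≫ s') ≫ z.s - z.f) = 0 := by
      rw [hab, S.trW.Q.map_comp]
      rw [hQK.eq_of_tgt (S.trW.Q.map a) 0]
      simp
    rw [S.trW.Q.map_sub, sub_eq_zero] at this
    exact this
  rw [← cancel_mono (S.trW.Q.map z.s),
    MorphismProperty.LeftFraction.map_comp_map_s, ← S.trW.Q.map_comp, key]
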